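/- arXiv:1305.6390 — 2 statements merged into one kernel-verified Lean document; each statement's English description precedes it below -/
import Mathlib

section
/- For every positive integer h and every real x with 0 ≤ x ≤ 1, we have 1 - (1 - x/h)^h ≥ (1 - 1/e) · x. -/
theorem rounding_key_inequality (h : ℕ) (hh : 0 < h) (x : ℝ) (hx0 : 0 ≤ x) (hx1 : x ≤ 1) :
    1 - (1 - x / (h : ℝ)) ^ h ≥ (1 - 1 / Real.exp 1) * x := by
  have hhR : (1 : ℝ) ≤ (h : ℝ) := by exact_mod_cast hh
  have hhpos : (0 : ℝ) < h := by linarith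
  have ht0 : 0 ≤ x / (h : ℝ) := div_nonneg hx0 hhpos.le
  have ht1 : x / (h : ℝ) ≤ 1 := by
    rw [div_le_one hhpos]; linarith
  -- step 1: (1 - x/h)^h ≤ exp(-x)
  have h1 : (1 - x / (h : ℝ)) ^ h ≤ Real.exp (-x) := by
    have hb : 1 - x / (h : ℝ) ≤ Real.exp (-(x / (h : ℝ))) := by
      have := Real.add_one_le_exp (-(x / (h : ℝ)))
      linarith
    calc (1 - x / (h : ℝ)) ^ h ≤ (Real.exp (-(x / (h : ℝ)))) ^ h :=
          pow_le_pow_left₀ (by linarith) hb h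
      _ = Real.exp (-x) := by
          rw [← Real.exp_nat_mul]
          congr 1
          field_simp
  -- step 2: exp(-x) ≤ 1 - (1 - 1/e) * x by convexity
  have h2 : Real.exp (-x) ≤ (1 - x) * 1 + x * Real.exp (-1) := by
    have := convexOn_exp.2 (Set.mem_univ (0 : ℝ)) (Set.mem_univ (-1 : ℝ))
      (by linarith : (0:ℝ) ≤ 1 - x) hx0 (by ring)
    simpa using this
  have he : Real.exp (-1) = 1 / Real.exp 1 := by
    rw [Real.exp_neg]; ring
  rw [he] at h2
  nlinarith [h1, h2]
end

section
/- For every integer h ≥ 2, we have 1 - (1 - 1/h)^h ≥ 1 - 1/e + 1/(32·h²). -/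
theorem quantitative_rounding_bound (h : ℕ) (hh : 2 ≤ h) :
    1 - (1 - 1 / (h : ℝ)) ^ h ≥ 1 - 1 / Real.exp 1 + 1 / (32 * (h : ℝ) ^ 2) := by
  have hH : (2:ℝ) ≤ (h:ℝ) := by exact_mod_cast hh
  have hHpos : (0:ℝ) < (h:ℝ) := by linarith
  set H : ℝ := (h:ℝ) with hHdef
  set t : ℝ := 1 / H with ht
  have htpos : 0 < t := by positivity
  have htle : t ≤ 1/2 := by
    rw [ht, div_le_div_iff₀ hHpos (by norm_num)]; linarith
  -- Step 1: 1 - t ≤ exp (-t - t^2/4)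
  have hb : 1 - t ≤ Real.exp (-t - t^2/4) := by
    have h1 : 1 - (t/2 + t^2/8) ≤ Real.exp (-(t/2 + t^2/8)) := by
      have := Real.add_one_le_exp (-(t/2 + t^2/8)); linarith
    have h2 : (0:ℝ) ≤ 1 - (t/2 + t^2/8) := by nlinarith
    have h3 : (1 - (t/2 + t^2/8))^2 ≤ Real.exp (-(t/2 + t^2/8))^2 :=
      pow_le_pow_left₀ h2 h1 2
    have h4 : Real.exp (-(t/2 + t^2/8))^2 = Real.exp (-t - t^2/4) := by
      rw [sq, ← Real.exp_add]; ring_nf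
    nlinarith [h3, h4]
  -- Step 2: (1-t)^h ≤ exp (-1 - 1/(4H))
  have hpow : (1 - t)^h ≤ Real.exp (-1 - 1/(4*H)) := by
    have h5 : (1 - t)^h ≤ Real.exp (-t - t^2/4) ^ h :=
      pow_le_pow_left₀ (by linarith) hb h
    have h6 : Real.exp (-t - t^2/4) ^ h = Real.exp ((h:ℝ) * (-t - t^2/4)) := by
      rw [← Real.exp_nat_mul]
    have h7 : (h:ℝ) * (-t - t^2/4) = -1 - 1/(4*H) := by
      rw [ht]; field_simp; ring
    rw [h6, h7] at h5; exact h5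
  -- Step 3: exp(-1 - s) ≤ 1/e - 1/(32 H²) where s = 1/(4H)
  set s : ℝ := 1/(4*H) with hs
  set E : ℝ := Real.exp 1 with hE
  have hEpos : 0 < E := Real.exp_pos 1
  have hE3 : E < 3 := by
    have := Real.exp_one_lt_d9; rw [← hE] at this; linarith
  have hspos : 0 < s := by positivity
  have hexp_s : Real.exp (-s) ≤ 1 - s + s^2 := by
    have h8 : Real.exp (-s) * Real.exp s = 1 := by
      rw [← Real.exp_add]; norm_num
    have h9 : 1 + s ≤ Real.exp s := by
      have := Real.add_one_le_exp s; linarith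
    have h10 : Real.exp (-s) * (1 + s) ≤ 1 := by
      calc Real.exp (-s) * (1 + s) ≤ Real.exp (-s) * Real.exp s :=
            mul_le_mul_of_nonneg_left h9 (Real.exp_pos _).le
        _ = 1 := h8
    nlinarith [h10, hspos, sq_nonneg s, Real.exp_pos (-s)]
  have hsplit : Real.exp (-1 - s) = E⁻¹ * Real.exp (-s) := by
    rw [sub_eq_add_neg, Real.exp_add, Real.exp_neg]
  have hkey : 3 * (1/(32*H^2)) ≤ s - s^2 := by
    have : s - s^2 - 3*(1/(32*H^2)) = (8*H - 5)/(32*H^2) := by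
      rw [hs]; field_simp; ring
    have hpos2 : (0:ℝ) ≤ (8*H - 5)/(32*H^2) := by
      apply div_nonneg (by linarith) (by positivity)
    linarith
  have hkey2 : 1/(32*H^2) ≤ E⁻¹ * (s - s^2) := by
    rw [inv_mul_eq_div, le_div_iff₀ hEpos]
    have h0 : (0:ℝ) < 1/(32*H^2) := by positivity
    nlinarith [hkey, h0]
  have hfinal : Real.exp (-1 - s) ≤ 1/E - 1/(32*H^2) := by
    calc Real.exp (-1 - s) = E⁻¹ * Real.exp (-s) := hsplit
      _ ≤ E⁻¹ * (1 - s + s^2) := by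
          apply mul_le_mul_of_nonneg_left hexp_s (by positivity)
      _ = E⁻¹ - E⁻¹ * (s - s^2) := by ring
      _ ≤ 1/E - 1/(32*H^2) := by rw [one_div]; linarith [hkey2]
  have := hpow.trans hfinal
  linarith [this]
end
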